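/- arXiv:2203.13692 — 3 statements merged into one kernel-verified Lean document; each statement's English description precedes it below -/
import Mathlib

section
/- Let R ⊆ S × S' be an A-simulation between iCGS G and G', and suppose q R q'. Then for every state r' ∈ C_A'(q') (the common knowledge neighborhood of q' for coalition A in G'), there exists a state r ∈ C_A(q) such that r R r'. -/
/-- An imperfect-information concurrent game structure (iCGS), given as raw data;
the defining axioms are collected in `iCGS.Valid`. -/
structure iCGS (Ag AP S Act : Type) where
  init : S
  indist : Ag → S → S → Prop
  protocol : Ag → S → Set Act
  trans : S → (Ag → Act) → S → Prop
  label : S → Set AP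

namespace iCGS

variable {Ag AP S S' Act Act' : Type}

/-- The axioms of an iCGS. -/
def Valid (G : iCGS Ag AP S Act) : Prop :=
  (∀ i, Equivalence (G.indist i)) ∧
  (∀ i s, (G.protocol i s).Nonempty) ∧
  (∀ i s s', G.indist i s s' → G.protocol i s = G.protocol i s') ∧
  (∀ s a, (∃ s', G.trans s a s') ↔ ∀ i, a i ∈ G.protocol i s)

/-- Common-knowledge reachability for coalition `A`:
reflexive-transitive closure of the union of the `∼ᵢ`, `i ∈ A`. -/
def ck (G : iCGS Ag AP S Act) (A : Set Ag) : S → S → Prop :=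
  Relation.ReflTransGen (fun s s' => ∃ i ∈ A, G.indist i s s')

/-- Common-knowledge neighbourhood `C_A(q)`. -/
def CKN (G : iCGS Ag AP S Act) (A : Set Ag) (q : S) : Set S := {r | G.ck A q r}

/-- "Everybody knows" neighbourhood `E_A(q)`. -/
def EKN (G : iCGS Ag AP S Act) (A : Set Ag) (q : S) : Set S :=
  {r | ∃ i ∈ A, G.indist i q r}

/-- `σ` is a partial uniform strategy for coalition `A` with domain `Q`. -/
def IsPStrat (G : iCGS Ag AP S Act) (A : Set Ag) (Q : Set S) (σ : Ag → S → Act) : Prop :=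
  (∀ i ∈ A, ∀ s ∈ Q, σ i s ∈ G.protocol i s) ∧
  (∀ i ∈ A, ∀ s ∈ Q, ∀ t ∈ Q, G.indist i s t → σ i s = σ i t)

/-- `σ` is a (total) uniform memoryless strategy for coalition `A`. -/
def IsStrat (G : iCGS Ag AP S Act) (A : Set Ag) (σ : Ag → S → Act) : Prop :=
  G.IsPStrat A Set.univ σ

/-- Successors of `s` under joint actions compatible with `σ` on coalition `A`. -/
def succ (G : iCGS Ag AP S Act) (A : Set Ag) (σ : Ag → S → Act) (s : S) : Set S :=
  {t | ∃ a : Ag → Act, (∀ i ∈ A, a i = σ i s) ∧ G.trans s a t}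

/-- Objective outcome set of strategy `σ` at `q` (runs as infinite state sequences). -/
def OutObj (G : iCGS Ag AP S Act) (A : Set Ag) (σ : Ag → S → Act) (q : S) :
    Set (ℕ → S) :=
  {lam | lam 0 = q ∧ ∀ j, lam (j + 1) ∈ G.succ A σ (lam j)}

/-- Subjective outcome set: union of objective outcomes over states indistinguishable
from `q` for some member of the coalition. -/
def OutSubj (G : iCGS Ag AP S Act) (A : Set Ag) (σ : Ag → S → Act) (q : S) :
    Set (ℕ → S) :=
  {lam | ∃ i ∈ A, ∃ r, G.indist i q r ∧ lam ∈ G.OutObj A σ r}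

/-- Outcome set: subjective (`x = true`) or objective (`x = false`).
(For a nonempty coalition the subjective case coincides with the union of
objective outcomes over indistinguishable states, by reflexivity; for the
empty coalition it degenerates to the objective case.) -/
def Out (G : iCGS Ag AP S Act) (x : Bool) (A : Set Ag) (σ : Ag → S → Act) (q : S) :
    Set (ℕ → S) :=
  if x then G.OutObj A σ q ∪ G.OutSubj A σ q else G.OutObj A σ q

/-- `R` is a simulation for coalition `A` from `G` to `G'` (Def. of simulation):
existence of a strategy simulator over common-knowledge neighbourhoods with
(a) atom agreement, (b) epistemic back-condition, (c) strategy transfer, and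
(2) injectivity modulo common-knowledge neighbourhoods. -/
def IsSimulation (G : iCGS Ag AP S Act) (G' : iCGS Ag AP S' Act') (A : Set Ag)
    (R : S → S' → Prop) : Prop :=
  (∃ ST : Set S → Set S' → (Ag → S → Act) → (Ag → S' → Act'),
    ∀ q q', R q q' →
      (∀ σ, G.IsPStrat A (G.CKN A q) σ →
        G'.IsPStrat A (G'.CKN A q') (ST (G.CKN A q) (G'.CKN A q') σ)) ∧
      (∀ r ∈ G.CKN A q, ∀ r' ∈ G'.CKN A q', R r r' →
        ∀ σ, G.IsPStrat A (G.CKN A q) σ →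
          ∀ s' ∈ G'.succ A (ST (G.CKN A q) (G'.CKN A q') σ) r',
            ∃ s ∈ G.succ A σ r, R s s')) ∧
  (∀ q q', R q q' → G.label q = G'.label q') ∧
  (∀ q q', R q q' → ∀ i ∈ A, ∀ r', G'.indist i q' r' →
    ∃ r, G.indist i q r ∧ R r r') ∧
  (∀ q₁ q₂ q', R q₁ q' → R q₂ q' → G.CKN A q₁ = G.CKN A q₂)

/-- `R` is a bisimulation for `A` iff both `R` and its converse are `A`-simulations. -/
def IsBisimulation (G : iCGS Ag AP S Act) (G' : iCGS Ag AP S' Act') (A : Set Ag)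
    (R : S → S' → Prop) : Prop :=
  G.IsSimulation G' A R ∧ G'.IsSimulation G A (fun q' q => R q q')

end iCGS

/-- if `R` is an `A`-simulation and `q R q'`, then every state of the
common-knowledge neighbourhood of `q'` is related to some state of the
common-knowledge neighbourhood of `q`. -/
theorem ckn_covered_by_simulation {Ag AP S S' Act Act' : Type}
    (G : iCGS Ag AP S Act) (G' : iCGS Ag AP S' Act')
    (hG : G.Valid) (hG' : G'.Valid) (A : Set Ag) (R : S → S' → Prop)
    (hsim : G.IsSimulation G' A R) (q : S) (q' : S') (hq : R q q') :
    ∀ r' ∈ G'.CKN A q', ∃ r ∈ G.CKN A q, R r r' := by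
  intro r' hr'
  obtain ⟨_, _, hback, _⟩ := hsim
  induction hr' with
  | refl => exact ⟨q, Relation.ReflTransGen.refl, hq⟩
  | tail _ hstep ih =>
    obtain ⟨r, hr, hRr⟩ := ih
    obtain ⟨i, hi, hind⟩ := hstep
    obtain ⟨s, hs, hRs⟩ := hback _ _ hRr i hi _ hind
    exact ⟨s, hr.tail ⟨i, hi, hs⟩, hRs⟩
end

section
/- Let R be an A-simulation between iCGS G and G' with q R q'. For every uniform strategy σ_A for coalition A in G, there exists a uniform strategy σ'_A in G' such that for every run λ' in the objective outcome set out^{G'}_obj(q', σ'_A), there exists a run λ in out^G_obj(q, σ_A) with λ[i] R λ'[i] for all i ≥ 0. -/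
namespace iCGS

variable {Ag AP S S' Act Act' : Type}

lemma ck_symm (G : iCGS Ag AP S Act) (A : Set Ag)
    (hind : ∀ i, Equivalence (G.indist i)) {s t : S} (h : G.ck A s t) :
    G.ck A t s := by
  have hsy : Symmetric (fun s s' => ∃ i ∈ A, G.indist i s s') := by
    rintro a b ⟨i, hi, hab⟩
    exact ⟨i, hi, (hind i).symm hab⟩
  haveI : Std.Symm (fun s s' => ∃ i ∈ A, G.indist i s s') := ⟨fun a b hab => hsy hab⟩
  exact (Relation.ReflTransGen.stdSymm (r := fun s s' => ∃ i ∈ A, G.indist i s s')).symm _ _ h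

lemma CKN_eq (G : iCGS Ag AP S Act) (A : Set Ag)
    (hind : ∀ i, Equivalence (G.indist i)) {s t : S} (h : G.ck A s t) :
    G.CKN A s = G.CKN A t := by
  ext r
  constructor
  · intro hr
    exact Relation.ReflTransGen.trans (G.ck_symm A hind h) hr
  · intro hr
    exact Relation.ReflTransGen.trans h hr

lemma back_ck (G : iCGS Ag AP S Act) (G' : iCGS Ag AP S' Act') (A : Set Ag)
    (R : S → S' → Prop)
    (hback : ∀ q q', R q q' → ∀ i ∈ A, ∀ r', G'.indist i q' r' →
      ∃ r, G.indist i q r ∧ R r r')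
    {t : S} {t' r' : S'} (hR : R t t') (h : G'.ck A t' r') :
    ∃ u, G.ck A t u ∧ R u r' := by
  induction h with
  | refl => exact ⟨t, Relation.ReflTransGen.refl, hR⟩
  | tail _ hstep ih =>
    obtain ⟨u, hcku, hRu⟩ := ih
    obtain ⟨i, hi, hind⟩ := hstep
    obtain ⟨v, hv, hRv⟩ := hback u _ hRu i hi _ hind
    exact ⟨v, Relation.ReflTransGen.tail hcku ⟨i, hi, hv⟩, hRv⟩

end iCGS

/-- strategy transfer along an `A`-simulation, objective outcomes:
for every uniform strategy `σ` of `A` in `G` there is a uniform strategy `σ'` in `G'`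
such that every objective outcome of `σ'` at `q'` is matched, position by position
via `R`, by some objective outcome of `σ` at `q`. -/
theorem simulation_transfers_strategies_obj {Ag AP S S' Act Act' : Type}
    (G : iCGS Ag AP S Act) (G' : iCGS Ag AP S' Act')
    (hG : G.Valid) (hG' : G'.Valid) (A : Set Ag) (R : S → S' → Prop)
    (hsim : G.IsSimulation G' A R) (q : S) (q' : S') (hq : R q q')
    (σ : Ag → S → Act) (hσ : G.IsStrat A σ) :
    ∃ σ' : Ag → S' → Act', G'.IsStrat A σ' ∧
      ∀ lam' ∈ G'.OutObj A σ' q', ∃ lam ∈ G.OutObj A σ q,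
        ∀ i, R (lam i) (lam' i) := by
  classical
  obtain ⟨⟨ST, hST⟩, hlab, hback, hinj⟩ := hsim
  -- σ restricted to any domain is a partial uniform strategy
  have hσP : ∀ Q : Set S, G.IsPStrat A Q σ := by
    intro Q
    exact ⟨fun i hi s _ => hσ.1 i hi s (Set.mem_univ s),
      fun i hi s _ t _ h => hσ.2 i hi s (Set.mem_univ s) t (Set.mem_univ t) h⟩
  -- default uniform strategy in G'
  have hδ : ∀ i : Ag, ∃ d : S' → Act', (∀ s, d s ∈ G'.protocol i s) ∧
      (∀ s t, G'.indist i s t → d s = d t) := by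
    intro i
    let st : Setoid S' := ⟨G'.indist i, hG'.1 i⟩
    refine ⟨fun s =>
      Classical.choose (hG'.2.1 i (Quotient.out (Quotient.mk st s))), ?_, ?_⟩
    · intro s
      have h1 := Classical.choose_spec (hG'.2.1 i (Quotient.out (Quotient.mk st s)))
      have h2 : G'.indist i (Quotient.out (Quotient.mk st s)) s :=
        Quotient.exact (Quotient.out_eq (Quotient.mk st s))
      have h3 := hG'.2.2.1 i _ s h2
      rw [← h3]; exact h1
    · intro s t hst
      have h2 : Quotient.mk st s = Quotient.mk st t := Quotient.sound hst
      exact congrArg (fun Q => Classical.choose (hG'.2.1 i (Quotient.out Q))) h2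
  -- the transferred strategy, defined classwise
  obtain ⟨F, hFdef⟩ : ∃ F : Set S' → Ag → S' → Act',
      F = fun C => if h : ∃ p : S × S', R p.1 p.2 ∧ p.2 ∈ C then
        ST (G.CKN A (Classical.choose h).1) C σ
      else fun i s => (hδ i).choose s := ⟨_, rfl⟩
  obtain ⟨σ'f, hσ'def⟩ : ∃ f : Ag → S' → Act',
      f = fun i x => F (G'.CKN A x) i x := ⟨_, rfl⟩
  -- on good classes F is a partial uniform strategy
  have hFgood : ∀ s' : S',
      ∀ h : ∃ p : S × S', R p.1 p.2 ∧ p.2 ∈ G'.CKN A s',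
      G'.IsPStrat A (G'.CKN A s') (F (G'.CKN A s')) := by
    intro s' h
    have hp := Classical.choose_spec h
    rw [hFdef]
    simp only [dif_pos h]
    obtain ⟨c, hcd⟩ : ∃ c, Classical.choose h = c := ⟨_, rfl⟩
    rw [hcd] at hp ⊢
    have he : G'.CKN A s' = G'.CKN A c.2 := iCGS.CKN_eq G' A hG'.1 hp.2
    rw [he]
    exact (hST _ _ hp.1).1 σ (hσP _)
  -- σ'f is a total uniform strategy
  have hσ'strat : G'.IsStrat A σ'f := by
    constructor
    · intro i hi s _
      rw [hσ'def]
      by_cases h : ∃ p : S × S', R p.1 p.2 ∧ p.2 ∈ G'.CKN A s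
      · exact (hFgood s h).1 i hi s Relation.ReflTransGen.refl
      · show F (G'.CKN A s) i s ∈ _
        rw [hFdef]
        simp only [dif_neg h]
        exact (hδ i).choose_spec.1 s
    · intro i hi s _ t _ hst
      rw [hσ'def]
      have hck : G'.ck A s t := Relation.ReflTransGen.single ⟨i, hi, hst⟩
      have he : G'.CKN A s = G'.CKN A t := iCGS.CKN_eq G' A hG'.1 hck
      show F (G'.CKN A s) i s = F (G'.CKN A t) i t
      rw [← he]
      by_cases h : ∃ p : S × S', R p.1 p.2 ∧ p.2 ∈ G'.CKN A s
      · exact (hFgood s h).2 i hi s Relation.ReflTransGen.refl t hck hst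
      · rw [hFdef]
        simp only [dif_neg h]
        exact (hδ i).choose_spec.2 s t hst
  -- one-step transfer of outcomes
  have hstep : ∀ r r', R r r' → ∀ s' ∈ G'.succ A σ'f r',
      ∃ s ∈ G.succ A σ r, R s s' := by
    intro r r' hRr s' hs'
    have h : ∃ p : S × S', R p.1 p.2 ∧ p.2 ∈ G'.CKN A r' :=
      ⟨(r, r'), hRr, Relation.ReflTransGen.refl⟩
    have hp := Classical.choose_spec h
    obtain ⟨c, hcd⟩ : ∃ c, Classical.choose h = c := ⟨_, rfl⟩
    rw [hcd] at hp
    have heC : G'.CKN A r' = G'.CKN A c.2 := iCGS.CKN_eq G' A hG'.1 hp.2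
    obtain ⟨u, hu, hRu⟩ := iCGS.back_ck G G' A R hback hp.1
      (iCGS.ck_symm G' A hG'.1 hp.2)
    have hCr : G.CKN A c.1 = G.CKN A r := by
      rw [iCGS.CKN_eq G A hG.1 hu]; exact hinj u r r' hRu hRr
    have hrmem : r ∈ G.CKN A c.1 := by
      rw [hCr]; exact Relation.ReflTransGen.refl
    have hr'mem : r' ∈ G'.CKN A c.2 := by
      rw [← heC]; exact Relation.ReflTransGen.refl
    have hs'2 : s' ∈ G'.succ A
        (ST (G.CKN A c.1) (G'.CKN A c.2) σ) r' := by
      obtain ⟨a, ha, htr⟩ := hs'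
      refine ⟨a, ?_, htr⟩
      intro i hi
      rw [ha i hi, hσ'def]
      show F (G'.CKN A r') i r' = _
      rw [hFdef]
      simp only [dif_pos h]
      rw [hcd, heC]
    exact (hST _ _ hp.1).2 r hrmem r' hr'mem hRr σ (hσP _) s' hs'2
  refine ⟨σ'f, hσ'strat, ?_⟩
  intro lam' hlam'
  obtain ⟨h0, hsucc⟩ := hlam'
  have key : ∀ n (r : S), R r (lam' n) →
      ∃ s, s ∈ G.succ A σ r ∧ R s (lam' (n + 1)) := by
    intro n r hr
    obtain ⟨s, hs1, hs2⟩ := hstep r (lam' n) hr (lam' (n + 1)) (hsucc n)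
    exact ⟨s, hs1, hs2⟩
  have hq0 : R q (lam' 0) := by rw [h0]; exact hq
  let g : ∀ n : ℕ, {s : S // R s (lam' n)} := fun n =>
    Nat.rec ⟨q, hq0⟩
      (fun n p => ⟨(key n p.1 p.2).choose, (key n p.1 p.2).choose_spec.2⟩) n
  refine ⟨fun n => (g n).1, ⟨rfl, ?_⟩, fun n => (g n).2⟩
  intro j
  exact (key j (g j).1 (g j).2).choose_spec.1
end

section
/- Let R be an A-simulation between iCGS G and G' with q R q'. For every uniform strategy σ_A for coalition A in G, there exists a uniform strategy σ'_A in G' such that for every run λ' in the subjective outcome set out^{G'}_subj(q', σ'_A), there exists a run λ in out^G_subj(q, σ_A) with λ[i] R λ'[i] for all i ≥ 0. -/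
/-- strategy transfer along an `A`-simulation, subjective outcomes. -/
theorem simulation_transfers_strategies_subj {Ag AP S S' Act Act' : Type}
    (G : iCGS Ag AP S Act) (G' : iCGS Ag AP S' Act')
    (hG : G.Valid) (hG' : G'.Valid) (A : Set Ag) (R : S → S' → Prop)
    (hsim : G.IsSimulation G' A R) (q : S) (q' : S') (hq : R q q')
    (σ : Ag → S → Act) (hσ : G.IsStrat A σ) :
    ∃ σ' : Ag → S' → Act', G'.IsStrat A σ' ∧
      ∀ lam' ∈ G'.OutSubj A σ' q', ∃ lam ∈ G.OutSubj A σ q,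
        ∀ i, R (lam i) (lam' i) := by
  classical
  obtain ⟨⟨ST, hST⟩, hlab, hback, hinj⟩ := hsim
  -- ck is symmetric / an equivalence (on both sides)
  have hcksymm : ∀ s t : S', G'.ck A s t → G'.ck A t s := by
    intro s t h
    induction h with
    | refl => exact Relation.ReflTransGen.refl
    | tail _ h ih =>
      obtain ⟨i, hiA, hind⟩ := h
      exact Relation.ReflTransGen.head ⟨i, hiA, (hG'.1 i).symm hind⟩ ih
  have hcktrans : ∀ {a b c : S'}, G'.ck A a b → G'.ck A b c → G'.ck A a c :=
    fun h1 h2 => Relation.ReflTransGen.trans h1 h2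
  have hCKN' : ∀ s t : S', G'.ck A s t → G'.CKN A s = G'.CKN A t := by
    intro s t h
    ext u
    exact ⟨fun hu => hcktrans (hcksymm s t h) hu, fun hu => hcktrans h hu⟩
  have hcksymmG : ∀ s t : S, G.ck A s t → G.ck A t s := by
    intro s t h
    induction h with
    | refl => exact Relation.ReflTransGen.refl
    | tail _ h ih =>
      obtain ⟨i, hiA, hind⟩ := h
      exact Relation.ReflTransGen.head ⟨i, hiA, (hG.1 i).symm hind⟩ ih
  have hCKNG : ∀ s t : S, G.ck A s t → G.CKN A s = G.CKN A t := by
    intro s t h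
    ext u
    exact ⟨fun hu => Relation.ReflTransGen.trans (hcksymmG s t h) hu,
      fun hu => Relation.ReflTransGen.trans h hu⟩
  -- lift ck-chains back along R
  have hlift : ∀ p p', R p p' → ∀ x', G'.ck A p' x' → ∃ x, G.ck A p x ∧ R x x' := by
    intro p p' hR x' h
    induction h with
    | refl => exact ⟨p, Relation.ReflTransGen.refl, hR⟩
    | tail _ hstep ih =>
      obtain ⟨x, hx, hRx⟩ := ih
      obtain ⟨i, hiA, hind⟩ := hstep
      obtain ⟨y, hy, hRy⟩ := hback _ _ hRx i hiA _ hind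
      exact ⟨y, Relation.ReflTransGen.tail hx ⟨i, hiA, hy⟩, hRy⟩
  -- uniqueness of CKN neighbourhoods of witnesses
  have hsame : ∀ p p' pp pp' s', R p p' → R pp pp' → G'.ck A p' s' → G'.ck A pp' s' →
      G.CKN A p = G.CKN A pp ∧ G'.CKN A p' = G'.CKN A pp' := by
    intro p p' pp pp' s' h1 h2 h3 h4
    have hpp' : G'.ck A p' pp' := hcktrans h3 (hcksymm _ _ h4)
    obtain ⟨x, hx, hRx⟩ := hlift p p' h1 pp' hpp'
    exact ⟨(hCKNG p x hx).trans (hinj x pp pp' hRx h2), hCKN' p' pp' hpp'⟩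
  -- a default totally uniform strategy on G'
  have hf : ∃ f : Ag → S' → Act',
      (∀ i s', f i s' ∈ G'.protocol i s') ∧
      (∀ i s' t', G'.indist i s' t' → f i s' = f i t') := by
    have hrep : ∀ i : Ag, ∃ rep : S' → S',
        (∀ s', G'.indist i (rep s') s') ∧
        (∀ s' t', G'.indist i s' t' → rep s' = rep t') := by
      intro i
      letI st : Setoid S' := ⟨G'.indist i, hG'.1 i⟩
      exact ⟨fun s' => (Quotient.mk st s').out,
        fun s' => Quotient.mk_out s',
        fun s' t' h => congrArg Quotient.out (Quotient.sound (a := s') (b := t') h)⟩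
    choose rep hrep1 hrep2 using hrep
    choose act hact using fun (i : Ag) (s : S') => hG'.2.1 i s
    refine ⟨fun i s' => act i (rep i s'), ?_, ?_⟩
    · intro i s'
      have := hact i (rep i s')
      rwa [hG'.2.2.1 i _ _ (hrep1 i s')] at this
    · intro i s' t' h
      exact congrArg (act i) (hrep2 i s' t' h)
  obtain ⟨f, hf1, hf2⟩ := hf
  -- σ restricts to a partial strategy on any domain
  have hσP : ∀ Q : Set S, G.IsPStrat A Q σ :=
    fun Q => ⟨fun j hj s _ => hσ.1 j hj s trivial,
      fun j hj s _ t _ h => hσ.2 j hj s trivial t trivial h⟩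
  -- the transferred strategy
  let D : S' → Prop := fun s' => ∃ pp : S × S', R pp.1 pp.2 ∧ G'.ck A pp.2 s'
  let σ' : Ag → S' → Act' := fun i s' =>
    if h : D s' then
      ST (G.CKN A (Classical.choose h).1) (G'.CKN A (Classical.choose h).2) σ i s'
    else f i s'
  have hagree : ∀ p p' s', R p p' → G'.ck A p' s' →
      ∀ i, σ' i s' = ST (G.CKN A p) (G'.CKN A p') σ i s' := by
    intro p p' s' hR hck i
    have hD : D s' := ⟨(p, p'), hR, hck⟩
    have hspec := Classical.choose_spec hD
    obtain ⟨h1, h2⟩ := hsame (Classical.choose hD).1 (Classical.choose hD).2 p p' s'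
      hspec.1 hR hspec.2 hck
    show dite _ _ _ = _
    rw [dif_pos hD, h1, h2]
  -- σ' is a total uniform strategy
  have hσ' : G'.IsStrat A σ' := by
    constructor
    · intro i hiA s' _
      by_cases h : D s'
      · obtain ⟨hR, hck⟩ := Classical.choose_spec h
        have hPS := (hST _ _ hR).1 σ (hσP _)
        rw [hagree _ _ s' hR hck i]
        exact hPS.1 i hiA s' hck
      · have he : σ' i s' = f i s' := dif_neg h
        rw [he]; exact hf1 i s'
    · intro i hiA s' _ t' _ hind
      by_cases h : D s'
      · obtain ⟨hR, hck⟩ := Classical.choose_spec h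
        have hckt : G'.ck A (Classical.choose h).2 t' :=
          Relation.ReflTransGen.tail hck ⟨i, hiA, hind⟩
        have hPS := (hST _ _ hR).1 σ (hσP _)
        rw [hagree _ _ s' hR hck i, hagree _ _ t' hR hckt i]
        exact hPS.2 i hiA s' hck t' hckt hind
      · have ht : ¬ D t' := by
          intro ⟨pp, hRpp, hckpp⟩
          exact h ⟨pp, hRpp, Relation.ReflTransGen.tail hckpp ⟨i, hiA, (hG'.1 i).symm hind⟩⟩
        have he : σ' i s' = f i s' := dif_neg h
        have he' : σ' i t' = f i t' := dif_neg ht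
        rw [he, he']; exact hf2 i s' t' hind
  -- key step lemma: successors transfer back
  have hkey : ∀ s s', R s s' → ∀ t' ∈ G'.succ A σ' s', ∃ t ∈ G.succ A σ s, R t t' := by
    intro s s' hR t' ht'
    have hDs : D s' := ⟨(s, s'), hR, Relation.ReflTransGen.refl⟩
    obtain ⟨hRp, hckp⟩ := Classical.choose_spec hDs
    have hsk : G.CKN A s = G.CKN A (Classical.choose hDs).1 :=
      (hsame s s' _ _ s' hR hRp Relation.ReflTransGen.refl hckp).1
    have hsCKN : s ∈ G.CKN A (Classical.choose hDs).1 := hsk ▸ Relation.ReflTransGen.refl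
    have ht'' : t' ∈ G'.succ A
        (ST (G.CKN A (Classical.choose hDs).1) (G'.CKN A (Classical.choose hDs).2) σ) s' := by
      obtain ⟨a, ha, htr⟩ := ht'
      exact ⟨a, fun i hi => (ha i hi).trans (hagree _ _ s' hRp hckp i), htr⟩
    exact (hST _ _ hRp).2 s hsCKN s' hckp hR σ (hσP _) t' ht''
  refine ⟨σ', hσ', ?_⟩
  intro lam' hlam'
  obtain ⟨i, hiA, r', hqr', h0', hstep'⟩ := hlam'
  obtain ⟨r, hqr, hRr⟩ := hback q q' hq i hiA r' hqr'
  have hR0 : R r (lam' 0) := h0' ▸ hRr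
  let nxt : ∀ j (s : S), R s (lam' j) → {t : S // t ∈ G.succ A σ s ∧ R t (lam' (j + 1))} :=
    fun j s hs => ⟨Classical.choose (hkey s (lam' j) hs (lam' (j + 1)) (hstep' j)),
      Classical.choose_spec (hkey s (lam' j) hs (lam' (j + 1)) (hstep' j))⟩
  let go : ∀ j, {s : S // R s (lam' j)} := fun j =>
    Nat.rec ⟨r, hR0⟩ (fun j ih => ⟨(nxt j ih.1 ih.2).1, (nxt j ih.1 ih.2).2.2⟩) j
  exact ⟨fun j => (go j).1,
    ⟨i, hiA, r, hqr, rfl, fun j => (nxt j (go j).1 (go j).2).2.1⟩,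
    fun j => (go j).2⟩
end
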